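/- Suppose (X_i, Y_i), i ∈ [n + m], are i.i.d. from P_{XY}, and let D : X → {0, 1} and C : X → 2^Y be fixed (non-random, measurable) selection and prediction-set rules. Then FCR(D, C) = mFCR(D, C) · P(Σ_{i=1}^m D(X_{n+i}) > 0), where FCR(D, C) = E[ Σ_{i∈[m]} 1{Y_{n+i} ∉ C(X_{n+i})} D(X_{n+i}) / (1 ∨ Σ_{i∈[m]} D(X_{n+i})) ] and mFCR(D, C) = E[1{Y ∉ C(X)} D(X)] / E[D(X)] (with the convention 0/0 = 0). -/

import Mathlib

open MeasureTheory ProbabilityTheory Classical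

/-- For fixed (non-random) selection rule D and prediction-set rule C, with iid pairs
(Xᵢ, Yᵢ) of common law P, FCR(D,C) = mFCR(D,C) · P(∑ᵢ D(X_{n+i}) > 0).
Conventions 0/0 = 0 are implicit in real division. -/
theorem stmt15 {Ω 𝓧 𝓨 : Type*} [MeasureSpace Ω] [IsProbabilityMeasure (ℙ : Measure Ω)]
    [MeasurableSpace 𝓧] [MeasurableSpace 𝓨]
    (n m : ℕ) (hm : 1 ≤ m)
    (X : Fin (n + m) → Ω → 𝓧) (Y : Fin (n + m) → Ω → 𝓨)
    (P : Measure (𝓧 × 𝓨)) [IsProbabilityMeasure P]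
    (hmeas : ∀ i, Measurable (fun ω => (X i ω, Y i ω)))
    (hlaw : ∀ i, Measure.map (fun ω => (X i ω, Y i ω)) ℙ = P)
    (hindep : iIndepFun (fun i ω => (X i ω, Y i ω)) ℙ)
    (D : 𝓧 → ℝ) (hD01 : ∀ x, D x = 0 ∨ D x = 1) (hDmeas : Measurable D)
    (C : 𝓧 → Set 𝓨) (hCmeas : MeasurableSet {q : 𝓧 × 𝓨 | q.2 ∈ C q.1}) :
    ∫ ω,
      (∑ i : Fin m,
          (if Y (Fin.natAdd n i) ω ∈ C (X (Fin.natAdd n i) ω) then (0:ℝ) else 1) *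
            D (X (Fin.natAdd n i) ω)) /
        max 1 (∑ i : Fin m, D (X (Fin.natAdd n i) ω)) ∂ℙ
      = ((∫ q, (if q.2 ∈ C q.1 then (0:ℝ) else 1) * D q.1 ∂P) / (∫ q, D q.1 ∂P)) *
        (ℙ {ω | 0 < ∑ i : Fin m, D (X (Fin.natAdd n i) ω)}).toReal := by
  classical
  set Z : Fin (n + m) → Ω → 𝓧 × 𝓨 := fun i ω => (X i ω, Y i ω) with hZ
  set d : 𝓧 × 𝓨 → ℝ := fun q => D q.1 with hd
  set g : 𝓧 × 𝓨 → ℝ := fun q => (if q.2 ∈ C q.1 then (0:ℝ) else 1) * D q.1 with hg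
  set k : Fin m → Fin (n + m) := Fin.natAdd n with hk
  set B : Fin m → Ω → ℝ := fun i ω => d (Z (k i) ω) with hB
  set S : Ω → ℝ := fun ω => ∑ i, B i ω with hS
  have hkinj : Function.Injective k := fun a b h => by
    have : n + (a : ℕ) = n + b := congrArg Fin.val h
    exact Fin.ext (Nat.add_left_cancel this)
  have hd01 : ∀ q, d q = 0 ∨ d q = 1 := fun q => hD01 q.1
  have hdmeas : Measurable d := hDmeas.comp measurable_fst
  have hgmeas : Measurable g :=
    (Measurable.ite hCmeas measurable_const measurable_const).mul hdmeas
  have hB01 : ∀ i ω, B i ω = 0 ∨ B i ω = 1 := fun i ω => hd01 _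
  have hBnn : ∀ i ω, 0 ≤ B i ω := fun i ω => by rcases hB01 i ω with h | h <;> simp [h]
  have hSnn : ∀ ω, 0 ≤ S ω := fun ω => Finset.sum_nonneg fun i _ => hBnn i ω
  have hSmeas : Measurable S :=
    Finset.measurable_sum _ fun i _ => hdmeas.comp (hmeas (k i))
  have hMmeas : Measurable fun ω => max 1 (S ω) := measurable_const.max hSmeas
  -- auxiliary T and c
  set T : Fin m → Ω → ℝ := fun i ω => ∑ j ∈ Finset.univ.erase i, B j ω with hT
  have hTnn : ∀ i ω, 0 ≤ T i ω := fun i ω => Finset.sum_nonneg fun j _ => hBnn j ω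
  set c : Fin m → ℝ := fun i => ∫ ω, (1 + T i ω)⁻¹ ∂ℙ with hc
  -- the key per-index lemma
  have key : ∀ (f : 𝓧 × 𝓨 → ℝ), Measurable f → (∀ q, f q = f q * d q) →
      (∀ q, |f q| ≤ 1) →
      ∀ i : Fin m, ∫ ω, f (Z (k i) ω) / max 1 (S ω) ∂ℙ = (∫ q, f q ∂P) * c i := by
    intro f hf hfd hfb i
    have hzero : ∀ q, d q = 0 → f q = 0 := fun q h => by rw [hfd q, h, mul_zero]
    -- pointwise rewrite
    have hpt : ∀ ω, f (Z (k i) ω) / max 1 (S ω) = f (Z (k i) ω) * (1 + T i ω)⁻¹ := by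
      intro ω
      rcases hB01 i ω with h | h
      · rw [hzero _ h]; simp
      · have hsum : S ω = 1 + T i ω := by
          have h2 : S ω = B i ω + T i ω :=
            (Finset.add_sum_erase Finset.univ (fun j => B j ω) (Finset.mem_univ i)).symm
          rw [h2, h]
        have hmax : max 1 (S ω) = 1 + T i ω := by
          rw [hsum]; exact max_eq_right (by linarith [hTnn i ω])
        rw [hmax, div_eq_mul_inv]
    rw [integral_congr_ae (Filter.Eventually.of_forall hpt)]
    -- independence
    have hdisj : Disjoint ({k i} : Finset (Fin (n + m)))
        ((Finset.univ.erase i).image k) := by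
      simp only [Finset.disjoint_singleton_left, Finset.mem_image, not_exists]
      rintro j ⟨hj, hji⟩
      exact Finset.ne_of_mem_erase hj (hkinj hji)
    have hI := hindep.indepFun_finset _ _ hdisj hmeas
    set φ : (({k i} : Finset (Fin (n + m))) → 𝓧 × 𝓨) → ℝ :=
      fun v => f (v ⟨k i, Finset.mem_singleton_self _⟩) with hφ
    set ψ : ((((Finset.univ.erase i).image k) : Finset (Fin (n + m))) → 𝓧 × 𝓨) → ℝ :=
      fun v => (1 + ∑ j ∈ (Finset.univ.erase i).attach,
        d (v ⟨k j.1, Finset.mem_image_of_mem k j.2⟩))⁻¹ with hψ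
    have hφm : Measurable φ := hf.comp (measurable_pi_apply _)
    have hψm : Measurable ψ :=
      (measurable_const.add (Finset.measurable_sum _ fun j _ =>
        hdmeas.comp (measurable_pi_apply _))).inv
    have hIndep : IndepFun (fun ω => f (Z (k i) ω)) (fun ω => (1 + T i ω)⁻¹) ℙ := by
      have he2 : (fun ω => (1 + T i ω)⁻¹)
          = ψ ∘ (fun a (x : ((Finset.univ.erase i).image k : Finset (Fin (n+m)))) => Z x a) := by
        funext ω
        simp only [Function.comp_apply, hψ]
        exact congrArg (fun t => (1 + t)⁻¹)
          (Finset.sum_attach (Finset.univ.erase i) (fun j => B j ω)).symm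
      have he1 : (fun ω => f (Z (k i) ω))
          = φ ∘ (fun a (x : ({k i} : Finset (Fin (n+m)))) => Z x a) := rfl
      rw [he1, he2]
      exact hI.comp hφm hψm
    have h1 : ∫ ω, f (Z (k i) ω) * (1 + T i ω)⁻¹ ∂ℙ =
        (∫ ω, f (Z (k i) ω) ∂ℙ) * c i := by
      exact hIndep.integral_mul_eq_mul_integral ((hf.comp (hmeas (k i))).aestronglyMeasurable)
        (((measurable_const.add (Finset.measurable_sum _ fun j _ =>
          hdmeas.comp (hmeas (k j)))).inv).aestronglyMeasurable)
    rw [h1]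
    congr 1
    rw [← hlaw (k i), integral_map (hmeas (k i)).aemeasurable hf.aestronglyMeasurable]
  -- boundedness / integrability of each term
  have hint : ∀ (f : 𝓧 × 𝓨 → ℝ), Measurable f → (∀ q, |f q| ≤ 1) →
      ∀ i : Fin m, Integrable (fun ω => f (Z (k i) ω) / max 1 (S ω)) ℙ := by
    intro f hf hfb i
    refine (integrable_const (1 : ℝ)).mono'
      (((hf.comp (hmeas (k i))).div hMmeas).aestronglyMeasurable)
      (Filter.Eventually.of_forall fun ω => ?_)
    have h1 : (1:ℝ) ≤ max 1 (S ω) := le_max_left _ _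
    rw [Real.norm_eq_abs, abs_div]
    rw [abs_of_nonneg (by linarith : (0:ℝ) ≤ max 1 (S ω))]
    calc |f (Z (k i) ω)| / max 1 (S ω) ≤ 1 / 1 :=
          div_le_div₀ (by norm_num) (hfb _) one_pos h1
      _ = 1 := by norm_num
  have hgd : ∀ q, g q = g q * d q := by
    intro q
    simp only [hg, hd]
    rcases hD01 q.1 with h | h <;> simp [h]
  have hdd : ∀ q, d q = d q * d q := by
    intro q; rcases hd01 q with h | h <;> simp [h]
  have hgb : ∀ q, |g q| ≤ 1 := by
    intro q
    simp only [hg]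
    rcases hD01 q.1 with h | h <;> by_cases h2 : q.2 ∈ C q.1 <;> simp [h, h2]
  have hdb : ∀ q, |d q| ≤ 1 := by
    intro q; rcases hd01 q with h | h <;> simp [hd] at h ⊢ <;> simp [h]
  set a : ℝ := ∫ q, g q ∂P with ha
  set b : ℝ := ∫ q, d q ∂P with hb
  set Csum : ℝ := ∑ i : Fin m, c i with hCsum
  -- LHS = a * Csum
  have hLHS : ∫ ω, (∑ i : Fin m, g (Z (k i) ω)) / max 1 (S ω) ∂ℙ = a * Csum := by
    have hpt : ∀ ω, (∑ i : Fin m, g (Z (k i) ω)) / max 1 (S ω) =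
        ∑ i : Fin m, g (Z (k i) ω) / max 1 (S ω) := fun ω => Finset.sum_div _ _ _
    rw [integral_congr_ae (Filter.Eventually.of_forall hpt),
      integral_finset_sum _ (fun i _ => hint g hgmeas hgb i)]
    rw [hCsum, Finset.mul_sum]
    exact Finset.sum_congr rfl fun i _ => key g hgmeas hgd hgb i
  -- P(S>0) = b * Csum
  have hindic : ∀ ω, Set.indicator {ω' | 0 < S ω'} (fun _ => (1:ℝ)) ω
      = S ω / max 1 (S ω) := by
    intro ω
    by_cases h : 0 < S ω
    · have h1 : (1:ℝ) ≤ S ω := by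
        obtain ⟨j, -, hj⟩ := Finset.exists_ne_zero_of_sum_ne_zero (ne_of_gt h)
        rcases hB01 j ω with h' | h'
        · exact absurd h' hj
        · calc (1:ℝ) = B j ω := h'.symm
            _ ≤ S ω := Finset.single_le_sum (fun i _ => hBnn i ω) (Finset.mem_univ j)
      rw [Set.indicator_of_mem (show ω ∈ {ω' | 0 < S ω'} from h) (fun _ => (1:ℝ)),
        max_eq_right h1, div_self (by linarith)]
    · have h0 : S ω = 0 := le_antisymm (not_lt.1 h) (hSnn ω)
      rw [Set.indicator_of_notMem (show ω ∉ {ω' | 0 < S ω'} from h) (fun _ => (1:ℝ)),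
        h0, zero_div]
  have hmeasset : MeasurableSet {ω | 0 < S ω} := hSmeas measurableSet_Ioi
  have hP : (ℙ {ω | 0 < S ω}).toReal = b * Csum := by
    have h1 : (ℙ {ω | 0 < S ω}).toReal =
        ∫ ω, Set.indicator {ω' | 0 < S ω'} (fun _ => (1:ℝ)) ω ∂ℙ := by
      rw [integral_indicator_const _ hmeasset]; simp; rfl
    rw [h1, integral_congr_ae (Filter.Eventually.of_forall hindic)]
    have hpt : ∀ ω, S ω / max 1 (S ω) = ∑ i : Fin m, d (Z (k i) ω) / max 1 (S ω) :=
      fun ω => Finset.sum_div _ _ _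
    rw [integral_congr_ae (Filter.Eventually.of_forall hpt),
      integral_finset_sum _ (fun i _ => hint d hdmeas hdb i)]
    rw [hCsum, Finset.mul_sum]
    exact Finset.sum_congr rfl fun i _ => key d hdmeas hdd hdb i
  -- assemble
  have hgoal : ∫ ω, (∑ i : Fin m, g (Z (k i) ω)) / max 1 (S ω) ∂ℙ
      = (a / b) * (ℙ {ω | 0 < S ω}).toReal := by
    rw [hLHS, hP]
    by_cases hb0 : b = 0
    · have hdint : Integrable d P := by
        refine (integrable_const (1 : ℝ)).mono' hdmeas.aestronglyMeasurable
          (Filter.Eventually.of_forall fun q => by rw [Real.norm_eq_abs]; exact hdb q)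
      have hgint : Integrable g P := by
        refine (integrable_const (1 : ℝ)).mono' hgmeas.aestronglyMeasurable
          (Filter.Eventually.of_forall fun q => by rw [Real.norm_eq_abs]; exact hgb q)
      have hgle : ∀ q, g q ≤ d q := by
        intro q
        simp only [hg, hd]
        rcases hD01 q.1 with h | h <;> by_cases h2 : q.2 ∈ C q.1 <;> simp [h, h2]
      have hgnn : ∀ q, 0 ≤ g q := by
        intro q
        simp only [hg]
        rcases hD01 q.1 with h | h <;> by_cases h2 : q.2 ∈ C q.1 <;> simp [h, h2]
      have ha0 : a = 0 := by
        have h1 : a ≤ b := integral_mono hgint hdint hgle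
        have h2 : 0 ≤ a := integral_nonneg hgnn
        linarith [hb0 ▸ h1]
      rw [ha0, hb0]
      simp
    · field_simp
  exact hgoal
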